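/- Every matrix in SL_3(𝔽_7) that has no eigenvalue in 𝔽_7 has order 19 or order 57 as a group element. -/

import Mathlib

open Matrix Polynomial

abbrev SL3 := Matrix.SpecialLinearGroup (Fin 3) (ZMod 7)

/-- `M` has an eigenvalue in `𝔽₇`. -/
def HasEigenvalueF7 (M : SL3) : Prop :=
  ∃ (μ : ZMod 7) (v : Fin 3 → ZMod 7), v ≠ 0 ∧ M.val.mulVec v = μ • v

theorem order_of_no_eigenvalue (M : SL3) (h : ¬ HasEigenvalueF7 M) :
    orderOf M = 19 ∨ orderOf M = 57 := by
  haveI : Fact (Nat.Prime 7) := ⟨by norm_num⟩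
  set A := M.val with hA
  set p := A.charpoly with hpdef
  have hdet : ∀ μ : ZMod 7, (A - μ • 1).det ≠ 0 := by
    intro μ hd
    obtain ⟨v, hv, hvz⟩ := (Matrix.exists_mulVec_eq_zero_iff).mpr hd
    refine h ⟨μ, v, hv, ?_⟩
    rw [Matrix.sub_mulVec, Matrix.smul_mulVec, Matrix.one_mulVec, sub_eq_zero] at hvz
    exact hvz
  have hmonic : p.Monic := A.charpoly_monic
  have hdeg : p.natDegree = 3 := by
    rw [hpdef, Matrix.charpoly_natDegree_eq_dim, Fintype.card_fin]
  have heval : ∀ μ : ZMod 7, p.eval μ ≠ 0 := by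
    intro μ he
    apply hdet μ
    have h1 : p.eval μ = (Matrix.scalar (Fin 3) μ - A).det := by
      rw [hpdef, Matrix.charpoly, _root_.eval_det, Matrix.matPolyEquiv_charmatrix]
      simp
    have h2 : A - μ • 1 = -(Matrix.scalar (Fin 3) μ - A) := by
      rw [Matrix.scalar_apply, ← Matrix.smul_one_eq_diagonal]
      rw [neg_sub]
    rw [h2, Matrix.det_neg, ← h1, he, mul_zero]
  have hroots : p.roots = 0 := by
    rw [Multiset.eq_zero_iff_forall_notMem]
    intro μ hμ
    exact heval μ ((Polynomial.mem_roots hmonic.ne_zero).mp hμ)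
  have hirr : Irreducible p :=
    (Polynomial.irreducible_iff_roots_eq_zero_of_degree_le_three
      (by omega) (by omega)).mpr hroots
  haveI : Fact (Irreducible p) := ⟨hirr⟩
  set K := AdjoinRoot p with hK
  set α : K := AdjoinRoot.root p with hα
  have hpne : p ≠ 0 := hmonic.ne_zero
  set pb := AdjoinRoot.powerBasis hpne with hpb
  haveI : Module.Finite (ZMod 7) K := Module.Finite.of_basis pb.basis
  haveI : Finite K := Module.finite_of_finite (ZMod 7)
  haveI : Fintype K := Fintype.ofFinite K
  have hfinrank : Module.finrank (ZMod 7) K = 3 := by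
    rw [pb.finrank]
    show p.natDegree = 3
    exact hdeg
  have hcard : Fintype.card K = 343 := by
    rw [Module.card_eq_pow_finrank (K := ZMod 7), hfinrank, ZMod.card]
    norm_num
  -- basic facts about α
  have hmin : minpoly (ZMod 7) α = p := by
    rw [hα, AdjoinRoot.minpoly_root hpne, hmonic.leadingCoeff, inv_one, Polynomial.C_1, mul_one]
  have haevα : (Polynomial.aeval α) p = 0 := by
    rw [hα, AdjoinRoot.aeval_eq, AdjoinRoot.mk_self]
  have hc0 : p.coeff 0 = -1 := by
    have hdA := Matrix.det_eq_sign_charpoly_coeff A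
    rw [M.property] at hdA
    rw [Fintype.card_fin] at hdA
    have : ((-1 : ZMod 7)) ^ 3 = -1 := by norm_num
    rw [this] at hdA
    linear_combination hdA
  have hα0 : α ≠ 0 := by
    intro h0
    rw [h0] at haevα
    rw [Polynomial.aeval_def, Polynomial.eval₂_at_zero, hc0] at haevα
    simp at haevα
  -- the key fact : α^7 ≠ α
  have hfrob : α ^ 7 ≠ α := by
    intro hfe
    have haev7 : (Polynomial.aeval α) (X ^ 7 - X : (ZMod 7)[X]) = 0 := by
      simp [hfe]
    have hdvd : p ∣ (X ^ 7 - X : (ZMod 7)[X]) := hmin ▸ minpoly.dvd _ _ haev7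
    have hq7 : (7 : ℕ) = Fintype.card (ZMod 7) := (ZMod.card 7).symm
    have hroots7 : (X ^ 7 - X : (ZMod 7)[X]).roots = Finset.univ.val := by
      have h := FiniteField.roots_X_pow_card_sub_X (ZMod 7)
      rwa [ZMod.card] at h
    have hmon7 : (X ^ 7 - X : (ZMod 7)[X]).Monic := by
      apply Polynomial.monic_X_pow_sub
      rw [Polynomial.degree_X]
      norm_num
    have hnd7 : (X ^ 7 - X : (ZMod 7)[X]).natDegree = 7 := by
      exact FiniteField.X_pow_card_sub_X_natDegree_eq (ZMod 7) (by norm_num)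
    have hcard7 : Multiset.card (X ^ 7 - X : (ZMod 7)[X]).roots =
        (X ^ 7 - X : (ZMod 7)[X]).natDegree := by
      rw [hroots7, hnd7]
      simp [ZMod.card]
    have hfact := Polynomial.prod_multiset_X_sub_C_of_monic_of_roots_card_eq hmon7 hcard7
    rw [← hfact] at hdvd
    obtain ⟨r, hr, hpr⟩ := hirr.prime.exists_mem_multiset_dvd hdvd
    obtain ⟨a, _, rfl⟩ := Multiset.mem_map.mp hr
    have := Polynomial.natDegree_le_of_dvd hpr (Polynomial.X_sub_C_ne_zero a)
    rw [hdeg, Polynomial.natDegree_X_sub_C] at this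
    omega
  -- Frobenius as an algebra hom
  haveI : CharP K 7 := charP_of_injective_algebraMap (algebraMap (ZMod 7) K).injective 7
  let F : K →ₐ[ZMod 7] K :=
    { frobenius K 7 with
      commutes' := fun c => by
        simp only [RingHom.toMonoidHom_eq_coe, OneHom.toFun_eq_coe, MonoidHom.toOneHom_coe,
          MonoidHom.coe_coe, frobenius_def]
        rw [← map_pow, ZMod.pow_card] }
  have hFdef : ∀ x : K, F x = x ^ 7 := fun x => rfl
  have hstep : ∀ x : K, (Polynomial.aeval x) p = 0 → (Polynomial.aeval (x ^ 7)) p = 0 := by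
    intro x hx
    have h := Polynomial.aeval_algHom_apply F x p
    rw [hx, map_zero, hFdef] at h
    exact h
  have haev7 : (Polynomial.aeval (α ^ 7)) p = 0 := hstep α haevα
  have haev49 : (Polynomial.aeval (α ^ 49)) p = 0 := by
    have := hstep _ haev7
    rwa [← pow_mul] at this
  -- distinctness
  have h342 : α ^ 342 = 1 := by
    have := FiniteField.pow_card_sub_one_eq_one α hα0
    rwa [hcard] at this
  have d3 : α ^ 49 ≠ α := by
    intro he
    apply hfrob
    have h48 : α ^ 48 = 1 := by
      have : α ^ 48 * α = 1 * α := by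
        rw [one_mul, ← pow_succ]; exact he
      exact mul_right_cancel₀ hα0 this
    have h6 : α ^ 6 = 1 := by
      have hd1 : orderOf α ∣ Nat.gcd 48 342 :=
        Nat.dvd_gcd (orderOf_dvd_of_pow_eq_one h48) (orderOf_dvd_of_pow_eq_one h342)
      have hg : Nat.gcd 48 342 = 6 := by norm_num
      rw [hg] at hd1
      exact orderOf_dvd_iff_pow_eq_one.mp hd1
    calc α ^ 7 = α ^ 6 * α := by rw [← pow_succ]
      _ = α := by rw [h6, one_mul]
  have d2 : α ^ 49 ≠ α ^ 7 := by
    intro he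
    apply hfrob
    apply frobenius_inj K 7
    rw [frobenius_def, frobenius_def, ← pow_mul]
    exact he
  -- q = p mapped to K factors as product of the three linear factors
  set q : K[X] := p.map (algebraMap (ZMod 7) K) with hq
  have hqmonic : q.Monic := hmonic.map _
  have hqdeg : q.natDegree = 3 := by
    rw [hq, Polynomial.natDegree_map, hdeg]
  have hdvd1 : (X - C α) ∣ q := by
    rw [Polynomial.dvd_iff_isRoot, Polynomial.IsRoot, hq, Polynomial.eval_map,
      ← Polynomial.aeval_def]
    exact haevα
  have hdvd2 : (X - C (α ^ 7)) ∣ q := by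
    rw [Polynomial.dvd_iff_isRoot, Polynomial.IsRoot, hq, Polynomial.eval_map,
      ← Polynomial.aeval_def]
    exact haev7
  have hdvd3 : (X - C (α ^ 49)) ∣ q := by
    rw [Polynomial.dvd_iff_isRoot, Polynomial.IsRoot, hq, Polynomial.eval_map,
      ← Polynomial.aeval_def]
    exact haev49
  have hcop12 : IsCoprime (X - C α) (X - C (α ^ 7)) :=
    Polynomial.isCoprime_X_sub_C_of_isUnit_sub ((sub_ne_zero_of_ne (Ne.symm hfrob)).isUnit)
  have hcop13 : IsCoprime (X - C α) (X - C (α ^ 49)) :=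
    Polynomial.isCoprime_X_sub_C_of_isUnit_sub ((sub_ne_zero_of_ne (Ne.symm d3)).isUnit)
  have hcop23 : IsCoprime (X - C (α ^ 7)) (X - C (α ^ 49)) :=
    Polynomial.isCoprime_X_sub_C_of_isUnit_sub ((sub_ne_zero_of_ne (Ne.symm d2)).isUnit)
  set E : K[X] := (X - C α) * (X - C (α ^ 7)) * (X - C (α ^ 49)) with hE
  have hEdvd : E ∣ q :=
    (hcop13.mul_left hcop23).mul_dvd (hcop12.mul_dvd hdvd1 hdvd2) hdvd3
  have hEmonic : E.Monic :=
    ((Polynomial.monic_X_sub_C α).mul (Polynomial.monic_X_sub_C (α ^ 7))).mul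
      (Polynomial.monic_X_sub_C (α ^ 49))
  have hEdeg : E.natDegree = 3 := by
    have h1 := (Polynomial.monic_X_sub_C α).natDegree_mul (Polynomial.monic_X_sub_C (α ^ 7))
    have h2 := ((Polynomial.monic_X_sub_C α).mul (Polynomial.monic_X_sub_C (α ^ 7))).natDegree_mul
      (Polynomial.monic_X_sub_C (α ^ 49))
    rw [hE, h2, h1]
    simp only [Polynomial.natDegree_X_sub_C]
  have hqE : q = E := by
    obtain ⟨u, hu⟩ := hEdvd
    have hu0 : u ≠ 0 := by
      intro h0
      rw [h0, mul_zero] at hu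
      exact hqmonic.ne_zero hu
    have hund : u.natDegree = 0 := by
      have := hqdeg
      rw [hu, Polynomial.natDegree_mul hEmonic.ne_zero hu0, hEdeg] at this
      omega
    have humonic : u.Monic := by
      have hlc : q.leadingCoeff = E.leadingCoeff * u.leadingCoeff := by
        rw [hu, Polynomial.leadingCoeff_mul]
      rw [hqmonic.leadingCoeff, hEmonic.leadingCoeff, one_mul] at hlc
      exact hlc.symm
    rw [hu, humonic.natDegree_eq_zero.mp hund, mul_one]
  have h57 : α ^ 57 = 1 := by
    have he0 : q.eval 0 = -1 := by
      rw [hq, Polynomial.eval_map, Polynomial.eval₂_at_zero, hc0, map_neg, _root_.map_one]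
    rw [hqE, hE] at he0
    simp only [Polynomial.eval_mul, Polynomial.eval_sub, Polynomial.eval_X, Polynomial.eval_C,
      zero_sub] at he0
    have hne : -(α ^ 57) = -1 := by
      rw [← he0]; ring
    exact neg_injective hne
  have hCH : Polynomial.eval₂ (algebraMap (ZMod 7) (Matrix (Fin 3) (Fin 3) (ZMod 7))) A p = 0 := by
    rw [← Polynomial.aeval_def]
    exact A.aeval_self_charpoly
  let ψ0 : (ZMod 7)[X] →+* Matrix (Fin 3) (Fin 3) (ZMod 7) := (Polynomial.aeval A).toRingHom
  have hker : ∀ g ∈ Ideal.span {p}, ψ0 g = 0 := by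
    intro g hg
    rw [Ideal.mem_span_singleton] at hg
    obtain ⟨c, rfl⟩ := hg
    show (Polynomial.aeval A) (p * c) = 0
    rw [_root_.map_mul, A.aeval_self_charpoly, zero_mul]
  let ψ : K →+* Matrix (Fin 3) (Fin 3) (ZMod 7) := Ideal.Quotient.lift _ ψ0 hker
  have hψα : ψ α = A := by
    show ψ0 X = A
    simp [ψ0]
  have hordA : orderOf A = orderOf α := by
    rw [← hψα]
    exact orderOf_injective ψ.toMonoidHom ψ.injective α
  let f : SL3 →* Matrix (Fin 3) (Fin 3) (ZMod 7) :=
    { toFun := fun g => g.val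
      map_one' := Matrix.SpecialLinearGroup.coe_one
      map_mul' := fun a b => Matrix.SpecialLinearGroup.coe_mul a b }
  have hfinj : Function.Injective f := fun a b hab => Subtype.coe_injective hab
  have hordM : orderOf M = orderOf α := by
    rw [← hordA]
    exact (orderOf_injective f hfinj M).symm
  have hdvd57 : orderOf α ∣ 57 := orderOf_dvd_of_pow_eq_one h57
  have hne1 : orderOf α ≠ 1 := by
    intro h1
    exact hfrob (by rw [orderOf_eq_one_iff.mp h1]; exact one_pow 7)
  have hne3 : orderOf α ≠ 3 := by
    intro h3
    apply hfrob
    have hp3 : α ^ 3 = 1 := by rw [← h3]; exact pow_orderOf_eq_one α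
    calc α ^ 7 = (α ^ 3) ^ 2 * α := by ring
      _ = α := by rw [hp3, one_pow, one_mul]
  have hmem : orderOf α ∈ Nat.divisors 57 := Nat.mem_divisors.mpr ⟨hdvd57, by norm_num⟩
  have hdivs : Nat.divisors 57 = {1, 3, 19, 57} := by decide
  rw [hdivs] at hmem
  simp only [Finset.mem_insert, Finset.mem_singleton] at hmem
  rcases hmem with h1 | h3 | h19 | h57'
  · exact absurd h1 hne1
  · exact absurd h3 hne3
  · exact Or.inl (hordM.trans h19)
  · exact Or.inr (hordM.trans h57')
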